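/- Every chordless graph is 2-degenerate, i.e., every nonempty subgraph of a chordless graph contains a vertex of degree at most 2. -/

import Mathlib

open SimpleGraph

noncomputable def edeg {V : Type*} (G : SimpleGraph V) (v : V) : ℕ :=
  {u | G.Adj v u}.ncard

def IsProperEdgeColoring {V : Type*} (G : SimpleGraph V) (c : Sym2 V → ℕ) : Prop :=
  ∀ e₁ ∈ G.edgeSet, ∀ e₂ ∈ G.edgeSet, e₁ ≠ e₂ → (∃ v, v ∈ e₁ ∧ v ∈ e₂) → c e₁ ≠ c e₂

def IsAcyclicEdgeColoring {V : Type*} (G : SimpleGraph V) (c : Sym2 V → ℕ) : Prop :=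
  IsProperEdgeColoring G c ∧
  ∀ (v : V) (w : G.Walk v v), w.IsCycle →
    ¬ ∃ α β : ℕ, ∀ e ∈ w.edges, c e = α ∨ c e = β

noncomputable def acyclicChromaticIndex {V : Type*} (G : SimpleGraph V) : ℕ :=
  sInf {n | ∃ c : Sym2 V → ℕ, IsAcyclicEdgeColoring G c ∧ ∀ e ∈ G.edgeSet, c e < n}

def Chordless {V : Type*} (G : SimpleGraph V) : Prop :=
  ∀ u v : V, G.Adj u v →
    ¬ ∃ (x : V) (w : (G.deleteEdges {s(u, v)}).Walk x x),
        w.IsCycle ∧ u ∈ w.support ∧ v ∈ w.support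

open Walk
section aux
variable {W : Type*} {G : SimpleGraph W} [DecidableEq W]

lemma takeUntil_first : ∀ {u v : W} (p : G.Walk u v) (h : u ∈ p.support),
    p.takeUntil u h = Walk.nil := by
  intro u v p h
  cases p <;> simp [Walk.takeUntil]

lemma takeUntil_cons' {u v w c : W} (r : G.Adj u v) (p : G.Walk v w)
    (hc : c ∈ (Walk.cons r p).support) (hne : u ≠ c) :
    (Walk.cons r p).takeUntil c hc
      = Walk.cons r (p.takeUntil c (by rw [Walk.support_cons] at hc; exact (List.mem_cons.mp hc).resolve_left fun h => hne h.symm)) := by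
  simp only [Walk.takeUntil, dif_neg hne]

lemma mem_support_takeUntil_cons {u v w c x : W} (r : G.Adj u v) (p : G.Walk v w)
    (hc : c ∈ (Walk.cons r p).support) (hne : u ≠ c) (hcp : c ∈ p.support) :
    x ∈ ((Walk.cons r p).takeUntil c hc).support ↔ x = u ∨ x ∈ (p.takeUntil c hcp).support := by
  rw [takeUntil_cons' r p hc hne, Walk.support_cons, List.mem_cons]

lemma takeUntil_total : ∀ {u v : W} (p : G.Walk u v) (b c : W)
    (hb : b ∈ p.support) (hc : c ∈ p.support),
    b ∈ (p.takeUntil c hc).support ∨ c ∈ (p.takeUntil b hb).support := by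
  intro u v p
  induction p with
  | nil =>
    intro b c hb hc
    left
    rw [Walk.mem_support_nil_iff] at hb
    subst hb
    exact Walk.start_mem_support _
  | @cons u v' w r p ih =>
    intro b c hb hc
    by_cases hbu : b = u
    · subst hbu; exact Or.inl (Walk.start_mem_support _)
    by_cases hcu : c = u
    · subst hcu; exact Or.inr (Walk.start_mem_support _)
    have hb' : b ∈ p.support := by
      rw [Walk.support_cons] at hb; exact (List.mem_cons.mp hb).resolve_left hbu
    have hc' : c ∈ p.support := by
      rw [Walk.support_cons] at hc; exact (List.mem_cons.mp hc).resolve_left hcu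
    rcases ih b c hb' hc' with h | h
    · left; rw [mem_support_takeUntil_cons r p hc (fun h => hcu h.symm) hc']; exact Or.inr h
    · right; rw [mem_support_takeUntil_cons r p hb (fun h => hbu h.symm) hb']; exact Or.inr h

lemma takeUntil_trans : ∀ {u v : W} (p : G.Walk u v) (b c : W)
    (hc : c ∈ p.support) (hb : b ∈ (p.takeUntil c hc).support) (x : W)
    (hx : x ∈ (p.takeUntil b (p.support_takeUntil_subset hc hb)).support),
    x ∈ (p.takeUntil c hc).support := by
  intro u v p
  induction p with
  | nil =>
    intro b c hc hb x hx
    rw [Walk.mem_support_nil_iff] at hc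
    subst hc
    rw [_root_.takeUntil_first] at hb ⊢
    rw [Walk.mem_support_nil_iff] at hb
    subst hb
    rwa [_root_.takeUntil_first] at hx
  | @cons u v' w r p ih =>
    intro b c hc hb x hx
    by_cases hcu : c = u
    · subst hcu
      rw [_root_.takeUntil_first] at hb ⊢
      rw [Walk.mem_support_nil_iff] at hb
      subst hb
      rwa [_root_.takeUntil_first] at hx
    have hc' : c ∈ p.support := by
      rw [Walk.support_cons] at hc; exact (List.mem_cons.mp hc).resolve_left hcu
    by_cases hbu : b = u
    · subst hbu
      rw [_root_.takeUntil_first] at hx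
      rw [Walk.mem_support_nil_iff] at hx
      subst hx
      exact Walk.start_mem_support _
    have hb'' : b ∈ (p.takeUntil c hc').support := by
      rw [mem_support_takeUntil_cons r p hc (fun h => hcu h.symm) hc'] at hb
      exact hb.resolve_left hbu
    have hb' : b ∈ p.support := p.support_takeUntil_subset hc' hb''
    rw [mem_support_takeUntil_cons r p _ (fun h => hbu h.symm) hb'] at hx
    rw [mem_support_takeUntil_cons r p hc (fun h => hcu h.symm) hc']
    rcases hx with h | h
    · exact Or.inl h
    · exact Or.inr (ih b c hc' hb'' x h)

omit [DecidableEq W] in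
lemma edge_start_eq {u v x : W} (p : G.Walk u v) (hp : p.IsPath)
    (he : s(u, x) ∈ p.edges) : x = p.getVert 1 := by
  cases p with
  | nil => simp at he
  | @cons u v' w r q =>
    rw [Walk.edges_cons, List.mem_cons] at he
    rcases he with he | he
    · rw [Sym2.eq_iff] at he
      rcases he with ⟨-, h⟩ | ⟨h1, h2⟩
      · simpa using h
      · exact absurd h1 r.ne
    · exact absurd (q.fst_mem_support_of_mem_edges he)
        ((Walk.cons_isPath_iff r q).mp hp).2

omit [DecidableEq W] in
lemma length_le_one_of_getVert {x v : W} (q : G.Walk x v) (hq : q.IsPath)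
    (h : v = q.getVert 1) : q.length ≤ 1 := by
  cases q with
  | nil => simp
  | @cons _ y _ r q' =>
    have hyv : v = y := by simpa using h
    subst hyv
    have := ((Walk.cons_isPath_iff r q').mp hq).1
    rw [Walk.isPath_iff_eq_nil] at this
    subst this
    simp

end aux

theorem stmt5 {V : Type*} [Fintype V] (G : SimpleGraph V) (h : Chordless G) :
    ∀ S : Set V, S.Nonempty → ∃ v : S, edeg (G.induce S) v ≤ 2 := by
  intro S hS
  by_contra hcon
  push_neg at hcon
  haveI : Fintype ↥S := (Set.toFinite S).fintype
  haveI : DecidableEq ↥S := Classical.decEq _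
  set H : SimpleGraph ↥S := G.induce S with hH
  -- longest path
  obtain ⟨v0, hv0⟩ := hS
  set L : Set ℕ := {n | ∃ (x y : ↥S) (p : H.Walk x y), p.IsPath ∧ p.length = n} with hL
  have hLne : L.Nonempty := ⟨0, ⟨v0, hv0⟩, ⟨v0, hv0⟩, Walk.nil, Walk.IsPath.nil, rfl⟩
  have hLbdd : BddAbove L := ⟨Fintype.card ↥S, by
    rintro n ⟨x, y, p, hp, hl⟩
    rw [← hl]; exact hp.length_lt.le⟩
  obtain ⟨x, y, p, hp, hlen⟩ := Nat.sSup_mem hLne hLbdd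
  -- every neighbor of x lies on p
  have hnbr : ∀ w : ↥S, H.Adj x w → w ∈ p.support := by
    intro w hw
    by_contra hws
    have hp' : (Walk.cons hw.symm p).IsPath := (Walk.cons_isPath_iff _ _).mpr ⟨hp, hws⟩
    have hmem : p.length + 1 ∈ L := ⟨w, y, _, hp', by simp⟩
    have := le_csSup hLbdd hmem
    omega
  -- three distinct neighbors of x
  have hfin : {u | H.Adj x u}.Finite := Set.toFinite _
  have hdeg : 3 ≤ hfin.toFinset.card := by
    have := hcon x
    rw [edeg, Set.ncard_eq_toFinset_card _ hfin] at this
    omega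
  obtain ⟨a, ha⟩ := Finset.card_pos.mp (by omega : 0 < hfin.toFinset.card)
  have h1 : 1 < hfin.toFinset.card := by omega
  obtain ⟨b, hb, hba⟩ := Finset.exists_mem_ne h1 a
  have hberase : b ∈ hfin.toFinset.erase a := Finset.mem_erase.mpr ⟨hba, hb⟩
  have h2 : 1 < (hfin.toFinset.erase a).card := by
    rw [Finset.card_erase_of_mem ha]; omega
  obtain ⟨c, hc, hcb⟩ := Finset.exists_mem_ne h2 b
  have hca : c ≠ a := (Finset.mem_erase.mp hc).1
  have hc' : c ∈ hfin.toFinset := (Finset.mem_erase.mp hc).2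
  have hxa : H.Adj x a := by simpa using hfin.mem_toFinset.mp ha
  have hxb : H.Adj x b := by simpa using hfin.mem_toFinset.mp hb
  have hxc : H.Adj x c := by simpa using hfin.mem_toFinset.mp hc'
  have hpa : a ∈ p.support := hnbr a hxa
  have hpb : b ∈ p.support := hnbr b hxb
  have hpc : c ∈ p.support := hnbr c hxc
  -- find the "last" one among a, b, c
  have key : ∃ (m d e : ↥S), H.Adj x m ∧ H.Adj x d ∧ H.Adj x e ∧ d ≠ e ∧ d ≠ m ∧ e ≠ m ∧
      ∃ hm : m ∈ p.support, d ∈ (p.takeUntil m hm).support ∧ e ∈ (p.takeUntil m hm).support := by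
    rcases takeUntil_total p a b hpa hpb with h1 | h1
    · rcases takeUntil_total p b c hpb hpc with h2 | h2
      · exact ⟨c, a, b, hxc, hxa, hxb, fun hh => hba hh.symm, fun hh => hca hh.symm,
          fun hh => hcb hh.symm, hpc, takeUntil_trans p b c hpc h2 a h1, h2⟩
      · exact ⟨b, a, c, hxb, hxa, hxc, fun hh => hca hh.symm, fun hh => hba hh.symm, hcb, hpb, h1, h2⟩
    · rcases takeUntil_total p a c hpa hpc with h2 | h2
      · exact ⟨c, b, a, hxc, hxb, hxa, hba, fun hh => hcb hh.symm,
          fun hh => hca hh.symm, hpc, takeUntil_trans p a c hpc h2 b h1, h2⟩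
      · exact ⟨a, b, c, hxa, hxb, hxc, fun hh => hcb hh.symm, hba, hca, hpa, h1, h2⟩
  obtain ⟨m, d, e, hxm, hxd, hxe, hde, hdm, hem, hm, hdT, heT⟩ := key
  set q : H.Walk x m := p.takeUntil m hm with hqdef
  have hq : q.IsPath := hp.takeUntil hm
  have hmx : m ≠ x := hxm.ne'
  have hdx : d ≠ x := hxd.ne'
  have hex : e ≠ x := hxe.ne'
  -- q has length at least 2
  have hql : 2 ≤ q.length := by
    by_contra hql
    push_neg at hql
    have hsup : q.support.length = q.length + 1 := q.length_support
    have hcard : ({x, d, e} : Finset ↥S).card ≤ q.support.toFinset.card := by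
      apply Finset.card_le_card
      intro z hz
      rw [List.mem_toFinset]
      simp only [Finset.mem_insert, Finset.mem_singleton] at hz
      rcases hz with rfl | rfl | rfl
      · exact q.start_mem_support
      · exact hdT
      · exact heT
    have h3 : ({x, d, e} : Finset ↥S).card = 3 := by
      rw [Finset.card_insert_of_notMem (by simp [Ne.symm hdx, Ne.symm hex]),
        Finset.card_insert_of_notMem (by simp [hde]), Finset.card_singleton]
    have := q.support.toFinset_card_le
    omega
  -- the closing edge is not an edge of q
  have hclose : s(m, x) ∉ q.edges := by
    intro hcl
    rw [Sym2.eq_swap] at hcl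
    have := length_le_one_of_getVert q hq (edge_start_eq q hq hcl)
    omega
  -- choose the chord endpoint b'
  set b' : ↥S := if d = q.getVert 1 then e else d with hb'def
  have hxb' : H.Adj x b' := by rw [hb'def]; split <;> assumption
  have hb'T : b' ∈ q.support := by rw [hb'def]; split <;> assumption
  have hb'm : b' ≠ m := by rw [hb'def]; split <;> assumption
  have hb'g : b' ≠ q.getVert 1 := by
    rw [hb'def]; split
    · rename_i hh; rw [← hh]; exact fun h2 => hde h2.symm
    · assumption
  have hchordedge : s(x, b') ∉ q.edges := fun hcl => hb'g (edge_start_eq q hq hcl)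
  -- build the cycle
  have hC : (Walk.cons hxm.symm q).IsCycle :=
    (Walk.cons_isCycle_iff q hxm.symm).mpr ⟨hq, hclose⟩
  -- move to G
  have hGadj : G.Adj ↑x ↑b' := hxb'
  set f : H →g G := (SimpleGraph.Embedding.induce S).toHom with hfdef
  have hfinj : Function.Injective f := Subtype.val_injective
  set w1 : G.Walk ↑m ↑m := (Walk.cons hxm.symm q).map f with hw1def
  have hw1 : w1.IsCycle := hC.map hfinj
  have hnotedge : s((x : V), (b' : V)) ∉ w1.edges := by
    show s((x : V), (b' : V)) ∉ ((Walk.cons hxm.symm q).map f).edges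
    rw [Walk.edges_map, List.mem_map]
    rintro ⟨e0, he0, hmapeq⟩
    have he0' : e0 = s(x, b') := by
      apply Sym2.map.injective hfinj
      rw [hmapeq, Sym2.map_pair_eq]
      rfl
    rw [he0'] at he0
    rw [Walk.edges_cons, List.mem_cons] at he0
    rcases he0 with he0 | he0
    · rw [Sym2.eq_iff] at he0
      rcases he0 with ⟨h1, -⟩ | ⟨-, h2⟩
      · exact hmx h1.symm
      · exact hb'm h2
    · exact hchordedge he0
  have hedges : ∀ e' ∈ w1.edges, e' ∈ (G.deleteEdges {s((x : V), (b' : V))}).edgeSet := by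
    intro e' he'
    rw [SimpleGraph.edgeSet_deleteEdges, Set.mem_diff]
    refine ⟨w1.edges_subset_edgeSet he', ?_⟩
    simp only [Set.mem_singleton_iff]
    rintro rfl
    exact hnotedge he'
  refine h ↑x ↑b' hGadj ⟨↑m, w1.transfer _ hedges, hw1.transfer hedges, ?_, ?_⟩
  · rw [Walk.support_transfer]
    show (x : V) ∈ ((Walk.cons hxm.symm q).map f).support
    rw [Walk.support_map]
    exact List.mem_map_of_mem (f := f) (by rw [Walk.support_cons]; exact List.mem_cons_of_mem _ q.start_mem_support)
  · rw [Walk.support_transfer]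
    show (b' : V) ∈ ((Walk.cons hxm.symm q).map f).support
    rw [Walk.support_map]
    exact List.mem_map_of_mem (f := f) (by rw [Walk.support_cons]; exact List.mem_cons_of_mem _ hb'T)
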